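/- arXiv:0812.1194 — 4 statements merged into one kernel-verified Lean document; each statement's English description precedes it below -/
import Mathlib

section
/- Let x_1,...,x_n ∈ Z_2 and define S_t = Σ_{i=1}^n C(n−i+t−1, t−1)·x_i (mod 2) for t ≥ 1. If x is not the zero vector, then S_t is not identically zero: there exists t ≥ 1 with S_t = 1. -/
/-- Binomial coefficients of `2^N - 1` are all odd. -/
lemma choose_two_pow_sub_one_odd : ∀ N s : ℕ, s ≤ 2 ^ N - 1 →
    Nat.choose (2 ^ N - 1) s % 2 = 1 := by
  intro N
  induction N with
  | zero => intro s hs; interval_cases s <;> decide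
  | succ N ih =>
    intro s hs
    have hP : Fact (Nat.Prime 2) := ⟨Nat.prime_two⟩
    have h := (Choose.choose_modEq_choose_mod_mul_choose_div_nat
      (n := 2 ^ (N + 1) - 1) (k := s) (p := 2))
    have h2 : (0:ℕ) < 2 ^ N := Nat.pow_pos (by norm_num)
    have hmod : (2 ^ (N + 1) - 1) % 2 = 1 := by
      have : 2 ^ (N + 1) = 2 * 2 ^ N := by ring
      omega
    have hdiv : (2 ^ (N + 1) - 1) / 2 = 2 ^ N - 1 := by
      have : 2 ^ (N + 1) = 2 * 2 ^ N := by ring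
      omega
    rw [hmod, hdiv] at h
    have hs2 : s / 2 ≤ 2 ^ N - 1 := by
      have : 2 ^ (N + 1) = 2 * 2 ^ N := by ring
      omega
    have hmid := ih (s / 2) hs2
    have hsm : Nat.choose 1 (s % 2) = 1 := by
      have : s % 2 < 2 := Nat.mod_lt _ (by norm_num)
      interval_cases h : s % 2 <;> decide
    rw [hsm, one_mul] at h
    have h' : (2 ^ (N + 1) - 1).choose s % 2 = (2 ^ N - 1).choose (s / 2) % 2 := h
    omega
    -- handle choose 1 (s%2) = 1
/-- If `r < s < 2^N`, then `C(2^N + r, s)` is even. -/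
lemma choose_two_pow_add_even : ∀ N r s : ℕ, r < s → s < 2 ^ N →
    Nat.choose (2 ^ N + r) s % 2 = 0 := by
  intro N
  induction N with
  | zero => intro r s h1 h2; omega
  | succ N ih =>
    intro r s h1 h2
    have hP : Fact (Nat.Prime 2) := ⟨Nat.prime_two⟩
    have h : (2 ^ (N + 1) + r).choose s % 2 = (((2 ^ (N + 1) + r) % 2).choose (s % 2) * ((2 ^ (N + 1) + r) / 2).choose (s / 2)) % 2 :=
      Choose.choose_modEq_choose_mod_mul_choose_div_nat (p := 2)
    have hpow : 2 ^ (N + 1) = 2 * 2 ^ N := by ring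
    have hmod : (2 ^ (N + 1) + r) % 2 = r % 2 := by omega
    have hdiv : (2 ^ (N + 1) + r) / 2 = 2 ^ N + r / 2 := by omega
    rw [hmod, hdiv] at h
    by_cases hlt : r / 2 < s / 2
    · have hih := ih (r / 2) (s / 2) hlt (by omega)
      have hmul : ((r % 2).choose (s % 2) * (2 ^ N + r / 2).choose (s / 2)) % 2 = 0 := by
        rw [Nat.mul_mod, hih]; simp
      omega
    · have heq : r / 2 = s / 2 := by omega
      -- r/2 = s/2 but r < s, so r even, s odd
      have hr : r % 2 = 0 := by omega
      have hs : s % 2 = 1 := by omega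
      rw [hr, hs] at h
      simp [Nat.choose] at h
      omega

/-- For a nonzero configuration `x ∈ (Z_2)^n`, the sequence
`S_t = Σ_{i=1}^n C(n-i+t-1, t-1) x_i (mod 2)` is not identically zero:
some `S_t` with `t ≥ 1` equals `1`.  (Here node `i ∈ {1,…,n}` is represented by
`i : Fin n` standing for `i+1`, so `n - i` becomes `n - 1 - i`.) -/
theorem stmt_4 (n : ℕ) (x : Fin n → ZMod 2) (hx : x ≠ 0) :
    ∃ t : ℕ, 1 ≤ t ∧
      (∑ i : Fin n, ((n - 1 - (i : ℕ) + (t - 1)).choose (t - 1) : ZMod 2) * x i) = 1 := by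
  classical
  have hone : ∀ a : ZMod 2, a ≠ 0 → a = 1 := by decide
  -- the set of nonzero coordinates
  set S : Finset (Fin n) := Finset.univ.filter (fun i => x i ≠ (0 : ZMod 2)) with hS
  have hSne : S.Nonempty := by
    rcases Function.ne_iff.mp hx with ⟨i, hi⟩
    exact ⟨i, by simpa [hS] using hi⟩
  set j : Fin n := S.max' hSne with hj
  have hxj : x j = 1 := hone _ (by have := S.max'_mem hSne; simpa [hS] using this)
  have hzero : ∀ i : Fin n, j < i → x i = 0 := by
    intro i hi
    by_contra hxi
    exact absurd (S.le_max' i (by simp [hS, hxi])) (not_le.mpr hi)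
  have hn : 0 < n := j.pos
  obtain ⟨N, hnN⟩ : ∃ N, n ≤ 2 ^ N := ⟨n, Nat.le_of_lt (Nat.lt_two_pow_self (n := n))⟩
  set k : ℕ := n - 1 - (j : ℕ) with hk
  have hk2 : k ≤ 2 ^ N - 1 := by
    have := j.isLt
    omega
  set s : ℕ := 2 ^ N - 1 - k with hs
  refine ⟨s + 1, by omega, ?_⟩
  have hts : s + 1 - 1 = s := by omega
  rw [hts]
  rw [Finset.sum_eq_single j]
  · -- the j term
    have : n - 1 - (j : ℕ) + s = 2 ^ N - 1 := by omega
    rw [this, hxj, mul_one]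
    have hodd := choose_two_pow_sub_one_odd N s (by omega)
    have : ((2 ^ N - 1).choose s : ZMod 2) = (((2 ^ N - 1).choose s % 2 : ℕ) : ZMod 2) := by
      rw [ZMod.natCast_mod]
    rw [this, hodd]
    norm_num
  · intro i _ hij
    rcases lt_or_gt_of_ne hij with hlt | hgt
    · -- i < j : coefficient is even
      have him : (i : ℕ) < (j : ℕ) := hlt
      have hjn := j.isLt
      have heq : n - 1 - (i : ℕ) + s = 2 ^ N + (n - 1 - (i : ℕ) - k - 1) := by omega
      rw [heq]
      have heven := choose_two_pow_add_even N (n - 1 - (i : ℕ) - k - 1) s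
        (by have := i.isLt; omega) (by omega)
      have : ((2 ^ N + (n - 1 - (i : ℕ) - k - 1)).choose s : ZMod 2) = 0 := by
        rw [show ((2 ^ N + (n - 1 - (i : ℕ) - k - 1)).choose s : ZMod 2)
            = (((2 ^ N + (n - 1 - (i : ℕ) - k - 1)).choose s % 2 : ℕ) : ZMod 2) from
          (ZMod.natCast_mod _ _).symm, heven]
        norm_num
      rw [this, zero_mul]
    · rw [hzero i hgt, mul_zero]
  · intro h
    exact absurd (Finset.mem_univ j) h
end

section
/- Every connected graph G with at least two edges admits a cyclic sequence e_0, e_1, ..., e_k of edges (indices mod k+1) such that every edge of G appears in the sequence, consecutive edges e_i and e_{i+1} share exactly one vertex, and no edge appears more than twice in the sequence. -/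
set_option linter.unusedSectionVars false
set_option linter.unnecessarySimpa false
section Aux

open List

variable {V : Type*} [DecidableEq V]

inductive SWalk : V → V → List (Sym2 V) → Prop
  | nil (u : V) : SWalk u u []
  | cons (u v w : V) (L : List (Sym2 V)) : SWalk v w L → SWalk u w (s(u, v) :: L)

theorem SWalk.append {u v w : V} {L1 L2 : List (Sym2 V)}
    (h1 : SWalk u v L1) (h2 : SWalk v w L2) : SWalk u w (L1 ++ L2) := by
  induction h1 with
  | nil => simpa
  | cons a b c L h ih => exact SWalk.cons a b w _ (ih h2)

theorem SWalk.nil_eq {u w : V} (h : SWalk u w ([] : List (Sym2 V))) : u = w := by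
  cases h; rfl

theorem SWalk.head_mem {u w : V} {a : Sym2 V} {L : List (Sym2 V)}
    (h : SWalk u w (a :: L)) : u ∈ a := by
  cases h with
  | cons _ v _ _ h' => exact Sym2.mem_mk_left _ _

theorem SWalk.head?_mem {u w : V} {L : List (Sym2 V)}
    (h : SWalk u w L) : ∀ a ∈ L.head?, u ∈ a := by
  cases L with
  | nil => simp
  | cons a L => simpa using h.head_mem

theorem SWalk.last_mem {u w : V} {L : List (Sym2 V)} (h : SWalk u w L) (hne : L ≠ []) :
    w ∈ L.getLast hne := by
  induction h with
  | nil => simp at hne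
  | cons a b c L h ih =>
    cases L with
    | nil =>
      have : b = c := h.nil_eq
      subst this
      simpa using Sym2.mem_mk_right a b
    | cons x L' =>
      rw [List.getLast_cons (by simp)]
      exact ih (by simp)

theorem SWalk.chain' {u w : V} {L : List (Sym2 V)} (h : SWalk u w L) :
    List.Chain' (fun a b => ∃ x, x ∈ a ∧ x ∈ b) L := by
  induction h with
  | nil => exact List.isChain_nil
  | cons a b c L h ih =>
    rw [List.Chain', List.isChain_cons]
    refine ⟨fun y hy => ⟨b, Sym2.mem_mk_right a b, h.head?_mem y hy⟩, ih⟩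

open List

variable {V : Type*} [DecidableEq V]

def SRel (s : Finset (Sym2 V)) (a b : V) : Prop := s(a, b) ∈ s

def SReach (s : Finset (Sym2 V)) : V → V → Prop := Relation.ReflTransGen (SRel s)

theorem SRel.symm' {s : Finset (Sym2 V)} {a b : V} (h : SRel s a b) : SRel s b a := by
  unfold SRel at *; rwa [Sym2.eq_swap]

open scoped Classical in
noncomputable def partA (s' : Finset (Sym2 V)) (u : V) : Finset (Sym2 V) :=
  s'.filter (fun f => ∃ y ∈ f, SReach s' u y)

open scoped Classical in
noncomputable def partB (s' : Finset (Sym2 V)) (u : V) : Finset (Sym2 V) :=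
  s'.filter (fun f => ¬ ∃ y ∈ f, SReach s' u y)

theorem mem_partA {s' : Finset (Sym2 V)} {u : V} {f : Sym2 V} :
    f ∈ partA s' u ↔ f ∈ s' ∧ ∃ y ∈ f, SReach s' u y := by
  classical simp [partA]

theorem mem_partB {s' : Finset (Sym2 V)} {u : V} {f : Sym2 V} :
    f ∈ partB s' u ↔ f ∈ s' ∧ ¬ ∃ y ∈ f, SReach s' u y := by
  classical simp [partB]

theorem reach_localA {s' : Finset (Sym2 V)} {u x : V} (h : SReach s' u x) :
    SReach (partA s' u) u x := by
  induction h with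
  | refl => exact Relation.ReflTransGen.refl
  | tail hb hbc ih =>
    refine Relation.ReflTransGen.tail ih ?_
    exact mem_partA.2 ⟨hbc, _, Sym2.mem_mk_left _ _, hb⟩

theorem reach_localB {s' : Finset (Sym2 V)} {u v x : V} (h : SReach s' v x)
    (hx : ¬ SReach s' u x) : SReach (partB s' u) v x := by
  induction h with
  | refl => exact Relation.ReflTransGen.refl
  | @tail b c hb hbc ih =>
    have hub : ¬ SReach s' u b := fun h => hx (h.tail hbc)
    refine Relation.ReflTransGen.tail (ih hub) (mem_partB.2 ⟨hbc, ?_⟩)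
    rintro ⟨y, hy, hr⟩
    rw [Sym2.mem_iff] at hy
    rcases hy with rfl | rfl
    · exact hub hr
    · exact hx hr

theorem reach_split {s : Finset (Sym2 V)} {u v x : V} (h : SReach s u x)
    (he : s(u, v) ∈ s) :
    SReach (s.erase s(u, v)) u x ∨ SReach (s.erase s(u, v)) v x := by
  induction h with
  | refl => exact Or.inl Relation.ReflTransGen.refl
  | @tail b c hb hbc ih =>
    by_cases hbc' : s(b, c) = s(u, v)
    · rw [Sym2.eq_iff] at hbc'
      rcases hbc' with ⟨rfl, rfl⟩ | ⟨rfl, rfl⟩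
      · exact Or.inr Relation.ReflTransGen.refl
      · exact Or.inl Relation.ReflTransGen.refl
    · have : SRel (s.erase s(u, v)) b c := Finset.mem_erase.2 ⟨hbc', hbc⟩
      rcases ih with h | h
      · exact Or.inl (h.tail this)
      · exact Or.inr (h.tail this)

theorem tour : ∀ (n : ℕ) (s : Finset (Sym2 V)), s.card ≤ n →
    ∀ u : V, (∀ f ∈ s, ∀ x ∈ f, SReach s u x) →
    ∃ L : List (Sym2 V), SWalk u u L ∧ ∀ f, L.count f = if f ∈ s then 2 else 0 := by
  intro n
  induction n with
  | zero =>
    intro s hs u _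
    have : s = ∅ := Finset.card_eq_zero.1 (Nat.le_zero.1 hs)
    subst this
    exact ⟨[], SWalk.nil u, fun f => by simp⟩
  | succ n ih =>
    intro s hs u hconn
    rcases s.eq_empty_or_nonempty with rfl | ⟨e0, he0⟩
    · exact ⟨[], SWalk.nil u, fun f => by simp⟩
    -- find an edge at u
    obtain ⟨v, hv⟩ : ∃ v, s(u, v) ∈ s := by
      have hx : e0.out.1 ∈ e0 := Sym2.out_fst_mem e0
      rcases (hconn e0 he0 _ hx).cases_head with heq | ⟨c, hc, _⟩
      · obtain ⟨y, hy⟩ := Sym2.mem_iff_exists.1 (heq ▸ hx)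
        exact ⟨y, hy ▸ he0⟩
      · exact ⟨c, hc⟩
    set e := s(u, v) with he_def
    set s' := s.erase e with hs'_def
    have hA_sub : partA s' u ⊆ s' := fun f hf => (mem_partA.1 hf).1
    have hB_sub : partB s' u ⊆ s' := fun f hf => (mem_partB.1 hf).1
    have hs'_card : s'.card < s.card := Finset.card_erase_lt_of_mem hv
    have hcard_s : s.card ≤ n + 1 := hs
    have hA_card : (partA s' u).card ≤ n := by
      have := Finset.card_le_card hA_sub
      omega
    have hB_card : (partB s' u).card ≤ n := by
      have := Finset.card_le_card hB_sub
      omega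
    -- connectivity for A
    have hA_conn : ∀ f ∈ partA s' u, ∀ x ∈ f, SReach (partA s' u) u x := by
      intro f hf x hx
      obtain ⟨hf', y, hy, hry⟩ := mem_partA.1 hf
      have hrx : SReach s' u x := by
        by_cases hxy : x = y
        · subst hxy; exact hry
        · refine hry.tail ?_
          have hfyx : f = s(y, x) := (Sym2.mem_and_mem_iff (Ne.symm hxy)).1 ⟨hy, hx⟩
          exact (hfyx ▸ hf' : s(y, x) ∈ s')
      exact reach_localA hrx
    -- connectivity for B
    have hB_conn : ∀ f ∈ partB s' u, ∀ x ∈ f, SReach (partB s' u) v x := by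
      intro f hf x hx
      obtain ⟨hf', hnA⟩ := mem_partB.1 hf
      have hnx : ¬ SReach s' u x := fun h => hnA ⟨x, hx, h⟩
      have hrx : SReach s u x := hconn f (Finset.erase_subset _ _ hf') x hx
      rcases reach_split hrx hv with h | h
      · exact absurd h hnx
      · exact reach_localB h hnx
    obtain ⟨LA, hLA, hcA⟩ := ih (partA s' u) hA_card u hA_conn
    obtain ⟨LB, hLB, hcB⟩ := ih (partB s' u) hB_card v hB_conn
    refine ⟨LA ++ e :: (LB ++ [e]), ?_, ?_⟩
    · refine hLA.append ?_
      refine SWalk.cons u v u _ (hLB.append ?_)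
      have : (s(v, u) : Sym2 V) = e := by rw [he_def, Sym2.eq_swap]
      rw [← this]
      exact SWalk.cons v u u [] (SWalk.nil u)
    · intro f
      have hcount : List.count f (LA ++ e :: (LB ++ [e])) =
          LA.count f + LB.count f + (if e = f then 2 else 0) := by
        simp only [List.count_append, List.count_cons, List.count_nil]
        by_cases h : e = f <;> simp [h] <;> omega
      rw [hcount, hcA, hcB]
      by_cases hfe : f = e
      · have h1 : e ∉ partA s' u := fun h => (Finset.mem_erase.1 (hA_sub h)).1 rfl
        have h2 : e ∉ partB s' u := fun h => (Finset.mem_erase.1 (hB_sub h)).1 rfl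
        rw [hfe]
        simp [h1, h2, hv]
      · by_cases hfs : f ∈ s
        · have hfs' : f ∈ s' := Finset.mem_erase.2 ⟨hfe, hfs⟩
          have : f ∈ partA s' u ∨ f ∈ partB s' u := by
            classical
            by_cases h : ∃ y ∈ f, SReach s' u y
            · exact Or.inl (mem_partA.2 ⟨hfs', h⟩)
            · exact Or.inr (mem_partB.2 ⟨hfs', h⟩)
          have hnot : ¬ (f ∈ partA s' u ∧ f ∈ partB s' u) := by
            rintro ⟨h1, h2⟩
            exact (mem_partB.1 h2).2 (mem_partA.1 h1).2
          rcases this with h | h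
          · have h2 : f ∉ partB s' u := fun h2 => hnot ⟨h, h2⟩
            simp [h, h2, hfs, Ne.symm hfe]
          · have h1 : f ∉ partA s' u := fun h1 => hnot ⟨h1, h⟩
            simp [h, h1, hfs, Ne.symm hfe]
        · have h1 : f ∉ partA s' u := fun h => absurd (Finset.erase_subset _ _ (hA_sub h)) hfs
          have h2 : f ∉ partB s' u := fun h => absurd (Finset.erase_subset _ _ (hB_sub h)) hfs
          simp [h1, h2, hfs, Ne.symm hfe]

section DD
variable {α : Type*} [DecidableEq α]

def dd : List α → List α
  | [] => []
  | [a] => [a]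
  | a :: b :: l => if a = b then dd (b :: l) else a :: dd (b :: l)

theorem dd_head? : ∀ (a : α) (l : List α), (dd (a :: l)).head? = some a := by
  intro a l
  induction l generalizing a with
  | nil => rfl
  | cons b l ih =>
    show (if a = b then dd (b :: l) else a :: dd (b :: l)).head? = some a
    by_cases h : a = b
    · rw [if_pos h, ih b]
      exact congrArg some h.symm
    · rw [if_neg h]; rfl

theorem dd_getLast? : ∀ (a : α) (l : List α), (dd (a :: l)).getLast? = (a :: l).getLast? := by
  intro a l
  induction l generalizing a with
  | nil => rfl
  | cons b l ih =>
    show (if a = b then dd (b :: l) else a :: dd (b :: l)).getLast? = _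
    have hne : dd (b :: l) ≠ [] := by
      intro h
      have := dd_head? b l
      rw [h] at this
      simp at this
    by_cases h : a = b
    · rw [if_pos h, ih b, List.getLast?_cons_cons]
    · rw [if_neg h, List.getLast?_cons, ih b, List.getLast?_cons_cons]
      cases hdd : dd (b :: l) with
      | nil => exact absurd hdd hne
      | cons x xs => simp [List.getLast?_cons]

theorem dd_count (f : α) : ∀ l : List α, (dd l).count f ≤ l.count f := by
  intro l
  induction l with
  | nil => simp [dd]
  | cons a l ih =>
    cases l with
    | nil => simp [dd]
    | cons b l2 =>
      show (if a = b then dd (b :: l2) else a :: dd (b :: l2)).count f ≤ _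
      by_cases h : a = b
      · rw [if_pos h]
        refine le_trans ih ?_
        simp only [List.count_cons]
        omega
      · rw [if_neg h]
        simp only [List.count_cons] at ih ⊢
        omega

theorem dd_mem {f : α} : ∀ {l : List α}, f ∈ l → f ∈ dd l := by
  intro l
  induction l with
  | nil => simp
  | cons a l ih =>
    cases l with
    | nil => simp [dd]
    | cons b l2 =>
      intro hf
      show f ∈ (if a = b then dd (b :: l2) else a :: dd (b :: l2))
      by_cases h : a = b
      · rw [if_pos h]
        rcases List.mem_cons.1 hf with rfl | hf
        · exact ih (h ▸ List.mem_cons_self)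
        · exact ih hf
      · rw [if_neg h]
        rcases List.mem_cons.1 hf with rfl | hf
        · exact List.mem_cons_self
        · exact List.mem_cons_of_mem _ (ih hf)

theorem dd_subset : ∀ {l : List α}, ∀ f ∈ dd l, f ∈ l := by
  intro l
  induction l with
  | nil => simp [dd]
  | cons a l ih =>
    cases l with
    | nil => simp [dd]
    | cons b l2 =>
      intro f hf
      rw [show dd (a :: b :: l2) = if a = b then dd (b :: l2) else a :: dd (b :: l2) from rfl] at hf
      by_cases h : a = b
      · rw [if_pos h] at hf
        exact List.mem_cons_of_mem _ (ih f hf)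
      · rw [if_neg h] at hf
        rcases List.mem_cons.1 hf with rfl | hf
        · exact List.mem_cons_self
        · exact List.mem_cons_of_mem _ (ih f hf)

theorem dd_chain' {R : α → α → Prop} : ∀ {l : List α}, List.Chain' R l →
    List.Chain' (fun a b => R a b ∧ a ≠ b) (dd l) := by
  intro l
  induction l with
  | nil => simp [dd, List.Chain']
  | cons a l ih =>
    cases l with
    | nil => simp [dd, List.Chain']
    | cons b l2 =>
      intro hc
      rw [List.Chain', List.isChain_cons_cons] at hc
      show List.Chain' _ (if a = b then dd (b :: l2) else a :: dd (b :: l2))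
      by_cases h : a = b
      · rw [if_pos h]; exact ih hc.2
      · rw [if_neg h]
        rw [List.Chain', List.isChain_cons]
        refine ⟨fun y hy => ?_, ih hc.2⟩
        rw [dd_head? b l2] at hy
        cases hy
        exact ⟨hc.1, h⟩

end DD

section Helpers
variable {α : Type*} [DecidableEq α]

theorem count_get (l : List α) (f : α) :
    (Finset.univ.filter (fun i : Fin l.length => l.get i = f)).card = l.count f := by
  induction l with
  | nil => simp
  | cons a l ih =>
    rw [Finset.card_filter]
    show (∑ i : Fin (l.length + 1), if (a :: l).get i = f then 1 else 0) = count f (a :: l)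
    rw [Fin.sum_univ_succ, ← Finset.card_filter]
    simp
    rw [show (Finset.filter (fun i : Fin l.length => l[(i : ℕ)] = f) Finset.univ)
        = Finset.filter (fun i : Fin l.length => l.get i = f) Finset.univ from rfl, ih]
    rw [List.count_cons]
    by_cases haf : a = f
    · simp [haf, Nat.add_comm]
    · simp [haf, Ne.symm haf]

theorem count_get' {n : ℕ} (l : List α) (h : n = l.length) (f : α) :
    (Finset.univ.filter (fun i : Fin n => l.get (Fin.cast h i) = f)).card = l.count f := by
  subst h
  simpa using count_get l f

theorem two_le_length {l : List α} {a b : α} (ha : a ∈ l) (hb : b ∈ l) (h : a ≠ b) :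
    2 ≤ l.length := by
  cases l with
  | nil => simp at ha
  | cons x t =>
    cases t with
    | nil =>
      simp only [List.mem_singleton] at ha hb
      exact absurd (ha.trans hb.symm) h
    | cons y t' => simp [Nat.le_add_left]

end Helpers

theorem shared_unique {α : Type*} {a b : Sym2 α} (hne : a ≠ b) {x : α}
    (hx : x ∈ a ∧ x ∈ b) : ∃! v, v ∈ a ∧ v ∈ b := by
  refine ⟨x, hx, fun y hy => ?_⟩
  by_contra h
  exact hne (Sym2.eq_of_ne_mem h hy.1 hx.1 hy.2 hx.2)

theorem finish_seq {V : Type*} [Fintype V] [DecidableEq V] (G : SimpleGraph V)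
    (N : List (Sym2 V)) (hne : N ≠ []) (hlen : 2 ≤ N.length)
    (hchain : List.Chain' (fun a b => (∃ x, x ∈ a ∧ x ∈ b) ∧ a ≠ b) N)
    (hwrap : (∃ x, x ∈ N.getLast hne ∧ x ∈ N.head hne) ∧ N.getLast hne ≠ N.head hne)
    (hmem : ∀ f ∈ N, f ∈ G.edgeSet) (hcov : ∀ f ∈ G.edgeSet, f ∈ N)
    (hcnt : ∀ f, N.count f ≤ 2) :
    ∃ (k : ℕ) (e : Fin (k + 1) → Sym2 V),
      (∀ i, e i ∈ G.edgeSet) ∧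
      (∀ f ∈ G.edgeSet, ∃ i, e i = f) ∧
      (∀ i : Fin (k + 1), e i ≠ e (i + 1) ∧ ∃! v : V, v ∈ e i ∧ v ∈ e (i + 1)) ∧
      (∀ f : Sym2 V, (Finset.univ.filter (fun i : Fin (k + 1) => e i = f)).card ≤ 2) := by
  set k := N.length - 1 with hk
  have hkn : k + 1 = N.length := by
    have := hlen; omega
  refine ⟨k, fun i => N.get (Fin.cast hkn i), ?_, ?_, ?_, ?_⟩
  · intro i
    exact hmem _ (N.get_mem _)
  · intro f hf
    obtain ⟨i, hi⟩ := List.get_of_mem (hcov f hf)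
    exact ⟨Fin.cast hkn.symm i, by simpa using hi⟩
  · intro i
    dsimp only
    have hiv : (i : ℕ) < k + 1 := i.isLt
    by_cases hik : (i : ℕ) < k
    · have hsucc : ((i + 1 : Fin (k+1)) : ℕ) = (i : ℕ) + 1 := by
        have : ((i + 1 : Fin (k+1)) : ℕ) = ((i : ℕ) + 1) % (k + 1) := by
          simp [Fin.add_def]
        rw [this, Nat.mod_eq_of_lt (by omega)]
      have hR := List.isChain_iff_getElem.1 hchain (i : ℕ) (by omega)
      have hgoal : N.get (Fin.cast hkn (i + 1)) = N.get ⟨(i : ℕ) + 1, by omega⟩ := by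
        congr 1
        ext
        simpa using hsucc
      have hgi : N.get (Fin.cast hkn i) = N.get ⟨(i : ℕ), by omega⟩ := rfl
      rw [hgoal, hgi]
      refine ⟨hR.2, ?_⟩
      obtain ⟨x, hx⟩ := hR.1
      exact shared_unique hR.2 hx
    · have hik' : (i : ℕ) = k := by omega
      have hsucc : ((i + 1 : Fin (k+1)) : ℕ) = 0 := by
        have : ((i + 1 : Fin (k+1)) : ℕ) = ((i : ℕ) + 1) % (k + 1) := by
          simp [Fin.add_def]
        rw [this, hik']
        simp
      have h1 : N.get (Fin.cast hkn (i + 1)) = N.head hne := by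
        rw [← List.get_mk_zero (by omega : 0 < N.length)]
        congr 1
        ext
        simpa using hsucc
      have h2 : N.get (Fin.cast hkn i) = N.getLast hne := by
        rw [List.getLast_eq_getElem]
        congr 1
        ext
        simp [hik', hkn]
        exact hk
      rw [h1, h2]
      refine ⟨hwrap.2, ?_⟩
      obtain ⟨x, hx⟩ := hwrap.1
      exact shared_unique hwrap.2 hx
  · intro f
    rw [count_get' N hkn f]
    exact hcnt f

end Aux

/-- Every finite connected simple graph with at least two edges admits a cyclic sequence
`e_0, …, e_k` of edges such that every edge of `G` appears in the sequence, consecutive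
edges (cyclically) are distinct and share exactly one vertex, and no edge appears more
than twice. -/
theorem stmt_6 {V : Type*} [Fintype V] [DecidableEq V] (G : SimpleGraph V)
    [DecidableRel G.Adj] (hconn : G.Connected) (hm : 2 ≤ G.edgeFinset.card) :
    ∃ (k : ℕ) (e : Fin (k + 1) → Sym2 V),
      (∀ i, e i ∈ G.edgeSet) ∧
      (∀ f ∈ G.edgeSet, ∃ i, e i = f) ∧
      (∀ i : Fin (k + 1), e i ≠ e (i + 1) ∧ ∃! v : V, v ∈ e i ∧ v ∈ e (i + 1)) ∧
      (∀ f : Sym2 V, (Finset.univ.filter (fun i : Fin (k + 1) => e i = f)).card ≤ 2) := by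
  classical
  set s := G.edgeFinset with hs_def
  obtain ⟨e1, he1, e2, he2, hne12⟩ := Finset.one_lt_card.1 (by omega : 1 < s.card)
  set u := e1.out.1 with hu_def
  have hconn' : ∀ f ∈ s, ∀ x ∈ f, SReach s u x := by
    intro f hf x hx
    have h1 : Relation.ReflTransGen G.Adj u x :=
      (SimpleGraph.reachable_iff_reflTransGen u x).1 (hconn.preconnected u x)
    exact Relation.ReflTransGen.mono (fun a b hab =>
      show s(a, b) ∈ s from SimpleGraph.mem_edgeFinset.2 ((SimpleGraph.mem_edgeSet G).2 hab)) _ _ h1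
  obtain ⟨L, hW, hcnt⟩ := tour s.card s le_rfl u hconn'
  have hLcov : ∀ f ∈ s, f ∈ L := by
    intro f hf
    have h := hcnt f
    rw [if_pos hf] at h
    exact List.count_pos_iff.1 (by omega)
  have hLmem : ∀ f ∈ L, f ∈ s := by
    intro f hf
    by_contra h
    have h2 := hcnt f
    rw [if_neg h] at h2
    have := List.count_pos_iff.2 hf
    omega
  have hLne : L ≠ [] := by
    intro h
    have := hLcov e1 he1
    rw [h] at this
    simp at this
  obtain ⟨a, l, rfl⟩ := List.exists_cons_of_ne_nil hLne
  set N0 := dd (a :: l) with hN0_def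
  have hhead? : N0.head? = some a := dd_head? a l
  have hN0ne : N0 ≠ [] := by
    intro h
    rw [h] at hhead?
    simp at hhead?
  have hheadN0 : N0.head hN0ne = a := by
    rw [List.head?_eq_head hN0ne] at hhead?
    exact Option.some.inj hhead?
  have hlast? : N0.getLast? = (a :: l).getLast? := dd_getLast? a l
  have hlastN0 : N0.getLast hN0ne = (a :: l).getLast (by simp) := by
    rw [List.getLast?_eq_getLast hN0ne, List.getLast?_eq_getLast (l := a :: l) (by simp)] at hlast?
    exact Option.some.inj hlast?
  have huhead : u ∈ a := hW.head_mem
  have hulast : u ∈ (a :: l).getLast (by simp) := hW.last_mem (by simp)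
  have hchain0 : List.Chain' (fun a b => (∃ x, x ∈ a ∧ x ∈ b) ∧ a ≠ b) N0 :=
    dd_chain' hW.chain'
  have hcov0 : ∀ f ∈ s, f ∈ N0 := fun f hf => dd_mem (hLcov f hf)
  have hmem0 : ∀ f ∈ N0, f ∈ G.edgeSet := fun f hf =>
    SimpleGraph.mem_edgeFinset.1 (hLmem f (dd_subset f hf))
  have hcnt0 : ∀ f, N0.count f ≤ 2 := by
    intro f
    refine le_trans (dd_count f _) ?_
    rw [hcnt f]
    split <;> omega
  have hlen0 : 2 ≤ N0.length := two_le_length (hcov0 e1 he1) (hcov0 e2 he2) hne12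
  by_cases hlh : N0.getLast hN0ne = N0.head hN0ne
  · -- drop the last element
    obtain ⟨N, hsplit⟩ : ∃ N, N ++ [N0.getLast hN0ne] = N0 :=
      ⟨N0.dropLast, List.dropLast_append_getLast hN0ne⟩
    have hNsub : List.Sublist N N0 := by
      rw [← hsplit]
      exact List.sublist_append_left _ _
    have hNlen : N0.length = N.length + 1 := by
      rw [← hsplit]
      simp
    have hNne : N ≠ [] := by
      intro h
      rw [h] at hNlen
      simp at hNlen
      omega
    have hchain0' := hchain0
    rw [← hsplit] at hchain0'
    obtain ⟨hcN, -, hlink⟩ := List.isChain_append.1 hchain0'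
    obtain ⟨n0, Nt, rfl⟩ := List.exists_cons_of_ne_nil hNne
    have hlinkN : (∃ x, x ∈ (n0 :: Nt).getLast hNne ∧ x ∈ N0.getLast hN0ne) ∧
        (n0 :: Nt).getLast hNne ≠ N0.getLast hN0ne := by
      refine hlink _ ?_ _ rfl
      rw [List.getLast?_eq_getLast hNne]
      rfl
    have hheadN : (n0 :: Nt).head hNne = a := by
      have h3 : ((n0 :: Nt) ++ [N0.getLast hN0ne]).head? = some a := by
        rw [hsplit]; exact hhead?
      simpa using h3
    have hcovN : ∀ f ∈ N0, f ∈ (n0 :: Nt) := by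
      intro f hf
      rw [← hsplit] at hf
      rcases List.mem_append.1 hf with h | h
      · exact h
      · simp only [List.mem_singleton] at h
        rw [h, hlh, hheadN0, ← hheadN]
        exact List.head_mem hNne
    have hmemN : ∀ f ∈ (n0 :: Nt), f ∈ G.edgeSet := fun f hf =>
      hmem0 f (hNsub.subset hf)
    have hcntN : ∀ f, (n0 :: Nt).count f ≤ 2 := fun f =>
      le_trans (hNsub.count_le f) (hcnt0 f)
    have hlenN : 2 ≤ (n0 :: Nt).length :=
      two_le_length (hcovN e1 (hcov0 e1 he1)) (hcovN e2 (hcov0 e2 he2)) hne12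
    refine finish_seq G (n0 :: Nt) hNne hlenN hcN ⟨?_, ?_⟩ hmemN
      (fun f hf => hcovN f (hcov0 f (SimpleGraph.mem_edgeFinset.2 hf))) hcntN
    · obtain ⟨x, hx1, hx2⟩ := hlinkN.1
      refine ⟨x, hx1, ?_⟩
      rw [hlh, hheadN0] at hx2
      rwa [hheadN]
    · rw [hheadN, ← hheadN0, ← hlh]
      exact hlinkN.2
  · refine finish_seq G N0 hN0ne hlen0 hchain0 ⟨⟨u, ?_, ?_⟩, hlh⟩ hmem0
      (fun f hf => hcov0 f (SimpleGraph.mem_edgeFinset.2 hf)) hcnt0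
    · rw [hlastN0]
      exact hulast
    · rw [hheadN0]
      exact huhead
end

section
/- In a graph with edges labeled bijectively by distinct numbers, any cycle contributes at most one vertex v at which the cycle can be traversed (starting and ending at v) with strictly increasing edge labels; moreover, every triangle contributes exactly one such vertex. -/
/-- The label of the `i`-th edge of the traversal of the cycle `c` started at `k`,
in direction `d` (`true` = forward, `false` = backward), under edge labeling `w`. -/
def travLabel {V : Type*} {r : ℕ} [NeZero r] (c : Fin r → V) (w : Sym2 V → ℤ)
    (d : Bool) (k i : Fin r) : ℤ :=
  if d then w s(c (k + i), c (k + i + 1)) else w s(c (k - i), c (k - i - 1))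

/-- `IncTrav c w p` : the traversal of the cycle `c` starting at position `p.1`, in
direction `p.2`, has strictly increasing edge labels. -/
def IncTrav {V : Type*} {r : ℕ} [NeZero r] (c : Fin r → V) (w : Sym2 V → ℤ)
    (p : Fin r × Bool) : Prop :=
  ∀ i j : Fin r, i < j → travLabel c w p.2 p.1 i < travLabel c w p.2 p.1 j

/-- The label of the `i`-th edge of the cycle. -/
def eLab {V : Type*} {r : ℕ} [NeZero r] (c : Fin r → V) (w : Sym2 V → ℤ) (i : Fin r) : ℤ :=
  w s(c i, c (i+1))

lemma travLabel_true {V : Type*} {r : ℕ} [NeZero r] (c : Fin r → V) (w : Sym2 V → ℤ)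
    (k i : Fin r) : travLabel c w true k i = eLab c w (k + i) := rfl

lemma travLabel_false {V : Type*} {r : ℕ} [NeZero r] (c : Fin r → V) (w : Sym2 V → ℤ)
    (k i : Fin r) : travLabel c w false k i = eLab c w (k - i - 1) := by
  show w s(c (k - i), c (k - i - 1)) = w s(c (k - i - 1), c (k - i - 1 + 1))
  rw [sub_add_cancel, Sym2.eq_swap]

lemma eLab_inj {V : Type*} (G : SimpleGraph V) (w : Sym2 V → ℤ)
    (hw : Set.InjOn w G.edgeSet) {n : ℕ} (c : Fin (n+3) → V)
    (hcinj : Function.Injective c) (hadj : ∀ i : Fin (n+3), G.Adj (c i) (c (i + 1))) :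
    Function.Injective (eLab c w) := by
  intro i j h
  have := hw (G.mem_edgeSet.2 (hadj i)) (G.mem_edgeSet.2 (hadj j)) h
  rw [Sym2.eq_iff] at this
  rcases this with ⟨h1, _⟩ | ⟨h1, h2⟩
  · exact hcinj h1
  · have hij : i = j + 1 := hcinj h1
    have hji : j = i + 1 := (hcinj h2).symm
    exfalso
    rw [hji] at hij
    have h2z : (2 : Fin (n+3)) = 0 := by
      refine (show (1 + 1 : Fin (n+3)) = 2 by rfl).symm.trans ?_
      rw [add_assoc] at hij
      exact (left_eq_add.mp hij)
    have := congrArg Fin.val h2z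
    simp [Nat.mod_eq_of_lt (show 2 < n+3 by omega)] at this

lemma neg_one_last {n : ℕ} : (-1 : Fin (n+3)) = Fin.last (n+2) :=
  (eq_neg_of_add_eq_zero_left (Fin.last_add_one (n+2))).symm

/-- An increasing traversal starts at the minimum-label edge and ends at the
maximum-label edge. -/
lemma inc_bounds {V : Type*} {n : ℕ} (c : Fin (n+3) → V) (w : Sym2 V → ℤ)
    (k : Fin (n+3)) (d : Bool) (h : IncTrav c w (k, d)) (t : Fin (n+3)) :
    eLab c w (if d then k else k - 1) ≤ eLab c w t ∧
    eLab c w t ≤ eLab c w (if d then k - 1 else k) := by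
  have h' : ∀ i j : Fin (n+3), i < j →
      travLabel c w d k i < travLabel c w d k j := h
  cases d with
  | true =>
    simp only [if_true]
    have hlast : k + Fin.last (n+2) = k - 1 := by
      rw [← neg_one_last, ← sub_eq_add_neg]
    have ht : k + (t - k) = t := by abel
    constructor
    · rcases (Fin.zero_le (t - k)).lt_or_eq with hlt | heq
      · have := h' 0 (t - k) hlt
        rw [travLabel_true, travLabel_true, add_zero, ht] at this
        exact this.le
      · have : t = k := by rw [← ht, ← heq, add_zero]
        rw [this]
    · rcases ((t - k).le_last).lt_or_eq with hlt | heq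
      · have := h' (t - k) (Fin.last (n+2)) hlt
        rw [travLabel_true, travLabel_true, ht, hlast] at this
        exact this.le
      · have : t = k - 1 := by rw [← ht, heq, hlast]
        rw [this]
  | false =>
    simp only [Bool.false_eq_true, if_false]
    have ht : k - (k - t - 1) - 1 = t := by abel
    have hlast : k - Fin.last (n+2) - 1 = k := by
      rw [← neg_one_last]; abel
    constructor
    · rcases (Fin.zero_le (k - t - 1)).lt_or_eq with hlt | heq
      · have := h' 0 (k - t - 1) hlt
        rw [travLabel_false, travLabel_false, ht, sub_zero] at this
        exact this.le
      · have : t = k - 1 := by rw [← ht, ← heq, sub_zero]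
        rw [this]
    · rcases ((k - t - 1).le_last).lt_or_eq with hlt | heq
      · have := h' (k - t - 1) (Fin.last (n+2)) hlt
        rw [travLabel_false, travLabel_false, ht, hlast] at this
        exact this.le
      · have : t = k := by rw [← ht, heq, hlast]
        rw [this]

lemma inc_subsingleton {V : Type*} {n : ℕ} (c : Fin (n+3) → V) (w : Sym2 V → ℤ)
    (hinj : Function.Injective (eLab c w)) :
    {p : Fin (n+3) × Bool | IncTrav c w p}.Subsingleton := by
  rintro ⟨k, d⟩ hp ⟨k', d'⟩ hq
  have hb := inc_bounds c w k d hp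
  have hb' := inc_bounds c w k' d' hq
  have hmax : (if d then k - 1 else k) = (if d' then k' - 1 else k') :=
    hinj (le_antisymm (hb' _).2 (hb _).2)
  have hmin : (if d then k else k - 1) = (if d' then k' else k' - 1) :=
    hinj (le_antisymm (hb _).1 (hb' _).1)
  cases d <;> cases d' <;>
    simp only [if_true, Bool.false_eq_true, if_false] at hmax hmin
  · rw [hmax]
  · exfalso
    have hs : k - 1 - 1 = k - 2 := by rw [sub_sub]; rfl
    have hk : k = k - 2 := by rw [← hs, hmin, ← hmax]
    have h2 : (2 : Fin (n+3)) = 0 := sub_eq_self.mp hk.symm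
    have := congrArg Fin.val h2
    simp [Nat.mod_eq_of_lt (show 2 < n+3 by omega)] at this
  · exfalso
    have hs : k - 1 - 1 = k - 2 := by rw [sub_sub]; rfl
    have hk : k = k - 2 := by rw [← hs, hmax, ← hmin]
    have h2 : (2 : Fin (n+3)) = 0 := sub_eq_self.mp hk.symm
    have := congrArg Fin.val h2
    simp [Nat.mod_eq_of_lt (show 2 < n+3 by omega)] at this
  · rw [hmin]

lemma key3 {V : Type*} (f : Fin 3 → V) (w : Sym2 V → ℤ) (k : Fin 3) (d : Bool)
    (h01 : travLabel f w d k 0 < travLabel f w d k 1)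
    (h12 : travLabel f w d k 1 < travLabel f w d k 2) :
    IncTrav f w (k, d) := by
  intro i j hij
  fin_cases i <;> fin_cases j <;>
    first
      | exact absurd hij (by decide)
      | exact h01
      | exact h12
      | exact h01.trans h12

lemma exists3 {V : Type*} (f : Fin 3 → V) (w : Sym2 V → ℤ)
    (hinj : Function.Injective (eLab f w)) : ∃ p : Fin 3 × Bool, IncTrav f w p := by
  have hne : ∀ i j : Fin 3, i ≠ j → eLab f w i ≠ eLab f w j :=
    fun i j hij h => hij (hinj h)
  rcases lt_trichotomy (eLab f w 0) (eLab f w 1) with h1 | h1 | h1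
  · rcases lt_trichotomy (eLab f w 1) (eLab f w 2) with h2 | h2 | h2
    · exact ⟨(0, true), key3 f w 0 true
        (by rw [travLabel_true, travLabel_true, show ((0:Fin 3) + 0) = 0 by decide,
              show ((0:Fin 3) + 1) = 1 by decide]; exact h1)
        (by rw [travLabel_true, travLabel_true, show ((0:Fin 3) + 1) = 1 by decide,
              show ((0:Fin 3) + 2) = 2 by decide]; exact h2)⟩
    · exact absurd h2 (hne 1 2 (by decide))
    · rcases lt_trichotomy (eLab f w 0) (eLab f w 2) with h3 | h3 | h3
      · exact ⟨(1, false), key3 f w 1 false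
          (by rw [travLabel_false, travLabel_false, show ((1:Fin 3) - 0 - 1) = 0 by decide,
                show ((1:Fin 3) - 1 - 1) = 2 by decide]; exact h3)
          (by rw [travLabel_false, travLabel_false, show ((1:Fin 3) - 1 - 1) = 2 by decide,
                show ((1:Fin 3) - 2 - 1) = 1 by decide]; exact h2)⟩
      · exact absurd h3 (hne 0 2 (by decide))
      · exact ⟨(2, true), key3 f w 2 true
          (by rw [travLabel_true, travLabel_true, show ((2:Fin 3) + 0) = 2 by decide,
                show ((2:Fin 3) + 1) = 0 by decide]; exact h3)
          (by rw [travLabel_true, travLabel_true, show ((2:Fin 3) + 1) = 0 by decide,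
                show ((2:Fin 3) + 2) = 1 by decide]; exact h1)⟩
  · exact absurd h1 (hne 0 1 (by decide))
  · rcases lt_trichotomy (eLab f w 0) (eLab f w 2) with h2 | h2 | h2
    · exact ⟨(2, false), key3 f w 2 false
        (by rw [travLabel_false, travLabel_false, show ((2:Fin 3) - 0 - 1) = 1 by decide,
              show ((2:Fin 3) - 1 - 1) = 0 by decide]; exact h1)
        (by rw [travLabel_false, travLabel_false, show ((2:Fin 3) - 1 - 1) = 0 by decide,
              show ((2:Fin 3) - 2 - 1) = 2 by decide]; exact h2)⟩
    · exact absurd h2 (hne 0 2 (by decide))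
    · rcases lt_trichotomy (eLab f w 1) (eLab f w 2) with h3 | h3 | h3
      · exact ⟨(1, true), key3 f w 1 true
          (by rw [travLabel_true, travLabel_true, show ((1:Fin 3) + 0) = 1 by decide,
                show ((1:Fin 3) + 1) = 2 by decide]; exact h3)
          (by rw [travLabel_true, travLabel_true, show ((1:Fin 3) + 1) = 2 by decide,
                show ((1:Fin 3) + 2) = 0 by decide]; exact h2)⟩
      · exact absurd h3 (hne 1 2 (by decide))
      · exact ⟨(0, false), key3 f w 0 false
          (by rw [travLabel_false, travLabel_false, show ((0:Fin 3) - 0 - 1) = 2 by decide,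
                show ((0:Fin 3) - 1 - 1) = 1 by decide]; exact h3)
          (by rw [travLabel_false, travLabel_false, show ((0:Fin 3) - 1 - 1) = 1 by decide,
                show ((0:Fin 3) - 2 - 1) = 0 by decide]; exact h1)⟩

/-- For a cycle in a graph with injectively labeled edges, at most one choice of starting
vertex and direction yields a traversal with strictly increasing edge labels; and for a
triangle, exactly one such choice exists. -/
theorem stmt_8 {V : Type*} (G : SimpleGraph V) (w : Sym2 V → ℤ)
    (hw : Set.InjOn w G.edgeSet) (r : ℕ) [NeZero r] (hr : 3 ≤ r) (c : Fin r → V)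
    (hcinj : Function.Injective c) (hadj : ∀ i : Fin r, G.Adj (c i) (c (i + 1))) :
    {p : Fin r × Bool | IncTrav c w p}.Subsingleton ∧
    (r = 3 → ∃! p : Fin r × Bool, IncTrav c w p) := by
  obtain ⟨n, rfl⟩ : ∃ n, r = n + 3 := ⟨r - 3, by omega⟩
  have hinj : Function.Injective (eLab c w) := eLab_inj G w hw c hcinj hadj
  have hsub := inc_subsingleton c w hinj
  refine ⟨hsub, fun h3 => ?_⟩
  obtain rfl : n = 0 := by omega
  obtain ⟨p, hp⟩ := exists3 c w hinj
  exact ⟨p, hp, fun q hq => hsub hq hp⟩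
end

section
/- On the star graph K_{1,n} with n ≥ 4, there is a 3-fair periodic node schedule and an initial configuration (two leaves labeled 1, all other vertices 0) such that, under the Pavlov dynamics where the scheduler also controls the partner choices realized along this schedule, the system returns to the initial configuration after each period and hence never reaches the all-zeros configuration. -/
open Fin.NatCast

/-- One step of the Pavlov dynamics along the edge `(u,v)`. -/
def pav {V : Type*} [DecidableEq V] (X : V → ZMod 2) (u v : V) : V → ZMod 2 :=
  fun w => if w = u ∨ w = v then X u + X v else X w

/-- One period of the node schedule `[0, 1, 1, 3, 4, …, n-2, 2, 1, n-1, n-1]`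
on the star `K_{1,n}` (center `0`, leaves `1, …, n`), of length `n + 3`. -/
def starSchedList (n : ℕ) : List (Fin (n + 1)) :=
  [0, ((1 : ℕ) : Fin (n + 1)), ((1 : ℕ) : Fin (n + 1))] ++
    (List.range (n - 4)).map (fun i => ((i + 3 : ℕ) : Fin (n + 1))) ++
    [((2 : ℕ) : Fin (n + 1)), ((1 : ℕ) : Fin (n + 1)),
      ((n - 1 : ℕ) : Fin (n + 1)), ((n - 1 : ℕ) : Fin (n + 1))]

/-- The periodic extension of the above schedule. -/
def starSched (n : ℕ) (t : ℕ) : Fin (n + 1) :=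
  (starSchedList n).getD (t % (n + 3)) 0

/-- The partner of the scheduled node: the center `0` plays leaf `1`; every scheduled
leaf plays the center (every edge of the star contains the center). -/
def starPartner (n : ℕ) (t : ℕ) : Fin (n + 1) :=
  if starSched n t = 0 then ((1 : ℕ) : Fin (n + 1)) else 0

/-- Nat-valued schedule value at offset `r` within a period. -/
def sval (n r : ℕ) : ℕ :=
  if r = 0 then 0 else if r ≤ 2 then 1 else if r ≤ n - 2 then r
  else if r = n - 1 then 2 else if r = n then 1 else n - 1

lemma castInj {n : ℕ} (hn : 4 ≤ n) {a b : ℕ} (ha : a ≤ n) (hb : b ≤ n) :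
    ((a : Fin (n+1)) = (b : Fin (n+1))) ↔ a = b := by
  constructor
  · intro h
    have := congrArg Fin.val h
    rwa [Fin.val_cast_of_lt (by omega), Fin.val_cast_of_lt (by omega)] at this
  · rintro rfl; rfl

lemma sval_le {n : ℕ} (hn : 4 ≤ n) (r : ℕ) : sval n r ≤ n := by
  unfold sval; split_ifs <;> first | contradiction | omega

lemma starSchedList_getD {n : ℕ} (hn : 4 ≤ n) {r : ℕ} (hr : r < n + 3) :
    (starSchedList n).getD r 0 = ((sval n r : ℕ) : Fin (n+1)) := by
  have hmidlen : ((List.range (n - 4)).map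
      (fun i => ((i + 3 : ℕ) : Fin (n + 1)))).length = n - 4 := by simp
  have hlen1 : ([(0 : Fin (n+1)), ((1 : ℕ) : Fin (n + 1)), ((1 : ℕ) : Fin (n + 1))] ++
      (List.range (n - 4)).map (fun i => ((i + 3 : ℕ) : Fin (n + 1)))).length = n - 1 := by
    simp; omega
  unfold starSchedList
  rcases lt_or_ge r 3 with h3 | h3
  · rw [List.getD_append _ _ _ _ (by rw [hlen1]; omega),
        List.getD_append _ _ _ _ (by simp; omega)]
    interval_cases r <;> simp [sval]
  · rcases lt_or_ge r (n - 1) with hm | hm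
    · rw [List.getD_append _ _ _ _ (by rw [hlen1]; omega),
          List.getD_append_right _ _ _ _ (by simp; omega)]
      rw [List.getD_eq_getElem _ _ (by simp; omega)]
      simp only [List.getElem_map, List.getElem_range, List.length_nil, List.length_cons]
      rw [show r - (0+1+1+1) + 3 = r by omega, show sval n r = r from by
        unfold sval; split_ifs <;> first | contradiction | omega]
    · rw [List.getD_append_right _ _ _ _ (by rw [hlen1]; omega), hlen1]
      have hr4 : r = n-1 ∨ r = n ∨ r = n+1 ∨ r = n+2 := by omega
      rcases hr4 with h | h | h | h
      · rw [show r - (n-1) = 0 by omega, show sval n r = 2 from by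
          unfold sval; split_ifs <;> first | contradiction | omega]; rfl
      · rw [show r - (n-1) = 1 by omega, show sval n r = 1 from by
          unfold sval; split_ifs <;> first | contradiction | omega]; rfl
      · rw [show r - (n-1) = 2 by omega, show sval n r = n - 1 from by
          unfold sval; split_ifs <;> first | contradiction | omega]; rfl
      · rw [show r - (n-1) = 3 by omega, show sval n r = n - 1 from by
          unfold sval; split_ifs <;> first | contradiction | omega]; rfl

lemma starSched_eq {n : ℕ} (hn : 4 ≤ n) (t : ℕ) :
    starSched n t = ((sval n (t % (n+3)) : ℕ) : Fin (n+1)) :=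
  starSchedList_getD hn (Nat.mod_lt _ (by omega))

lemma sval_inj {n : ℕ} (hn : 4 ≤ n) {r1 r2 : ℕ} (h1 : r1 < n+3) (h2 : r2 < n+3)
    (hb1 : r1 ≠ 2 ∧ r1 ≠ n ∧ r1 ≠ n+2) (hb2 : r2 ≠ 2 ∧ r2 ≠ n ∧ r2 ≠ n+2)
    (he : sval n r1 = sval n r2) : r1 = r2 := by
  unfold sval at he; split_ifs at he <;> omega

lemma count_le_three {n : ℕ} (hn : 4 ≤ n) (y : Fin (n+1)) :
    ((Finset.range (n+3)).filter
      (fun r => ((sval n r : ℕ) : Fin (n+1)) = y)).card ≤ 3 := by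
  classical
  have hB : ({2, n, n+2} : Finset ℕ) ⊆ Finset.range (n+3) := by
    intro r hr; simp at hr; simp; omega
  have hsplit : Finset.range (n+3) =
      (Finset.range (n+3) \ {2, n, n+2}) ∪ ({2, n, n+2} : Finset ℕ) :=
    (Finset.sdiff_union_of_subset hB).symm
  have hdisj : Disjoint (Finset.range (n+3) \ ({2, n, n+2} : Finset ℕ))
      ({2, n, n+2} : Finset ℕ) := Finset.sdiff_disjoint
  rw [hsplit, Finset.filter_union,
    Finset.card_union_of_disjoint (Finset.disjoint_filter_filter hdisj)]
  have hA : ((Finset.range (n+3) \ ({2, n, n+2} : Finset ℕ)).filter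
      (fun r => ((sval n r : ℕ) : Fin (n+1)) = y)).card ≤ 1 := by
    apply Finset.card_le_one.mpr
    intro a ha b hb
    simp only [Finset.mem_filter, Finset.mem_sdiff, Finset.mem_range,
      Finset.mem_insert, Finset.mem_singleton] at ha hb
    have heq : ((sval n a : ℕ) : Fin (n+1)) = ((sval n b : ℕ) : Fin (n+1)) := by
      rw [ha.2, hb.2]
    rw [castInj hn (sval_le hn a) (sval_le hn b)] at heq
    push_neg at ha hb
    exact sval_inj hn ha.1.1 hb.1.1 ⟨ha.1.2.1, ha.1.2.2⟩ ⟨hb.1.2.1, hb.1.2.2⟩ heq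
  have hB2 : (({2, n, n+2} : Finset ℕ).filter
      (fun r => ((sval n r : ℕ) : Fin (n+1)) = y)).card ≤ 2 := by
    by_cases hy : y = ((1 : ℕ) : Fin (n+1))
    · have hsub : (({2, n, n+2} : Finset ℕ).filter
          (fun r => ((sval n r : ℕ) : Fin (n+1)) = y)) ⊆ {2, n} := by
        intro r hr
        simp only [Finset.mem_filter, Finset.mem_insert, Finset.mem_singleton] at hr
        rcases hr.1 with h | h | h
        · simp [h]
        · simp [h]
        · exfalso
          have hr2 := hr.2
          rw [h, show sval n (n+2) = n - 1 from by unfold sval; split_ifs <;> first | contradiction | omega,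
            hy] at hr2
          have := (castInj hn (by omega) (by omega)).mp hr2
          omega
      calc _ ≤ ({2, n} : Finset ℕ).card := Finset.card_le_card hsub
        _ ≤ 2 := by apply le_trans (Finset.card_insert_le _ _); simp
    · have hsub : (({2, n, n+2} : Finset ℕ).filter
          (fun r => ((sval n r : ℕ) : Fin (n+1)) = y)) ⊆ {n+2} := by
        intro r hr
        simp only [Finset.mem_filter, Finset.mem_insert, Finset.mem_singleton] at hr
        rcases hr.1 with h | h | h
        · exfalso
          have hr2 := hr.2
          rw [h, show sval n 2 = 1 from by unfold sval; split_ifs <;> first | contradiction | omega] at hr2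
          exact hy hr2.symm
        · exfalso
          have hr2 := hr.2
          rw [h, show sval n n = 1 from by unfold sval; split_ifs <;> first | contradiction | omega] at hr2
          exact hy hr2.symm
        · simp [h]
      calc _ ≤ ({n+2} : Finset ℕ).card := Finset.card_le_card hsub
        _ ≤ 2 := by simp
  omega

lemma fairness {n : ℕ} (hn : 4 ≤ n) (y : Fin (n+1)) (x : Fin (n+1)) (a b : ℕ) (hab : a < b)
    (hax : starSched n a = x)
    (hbet : ∀ t, a < t → t < b → starSched n t ≠ x) :
    ((Finset.Ioo a b).filter (fun t => starSched n t = y)).card ≤ 3 := by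
  have hble : b ≤ a + (n+3) := by
    by_contra h
    push_neg at h
    refine hbet (a + (n+3)) (by omega) (by omega) ?_
    rw [show starSched n (a+(n+3)) = starSched n a from by
      simp [starSched, Nat.add_mod_right]]
    exact hax
  calc ((Finset.Ioo a b).filter (fun t => starSched n t = y)).card
      ≤ ((Finset.range (n+3)).filter
          (fun r => ((sval n r : ℕ) : Fin (n+1)) = y)).card := by
        apply Finset.card_le_card_of_injOn (fun t => t % (n+3))
        · intro t ht
          simp only [Finset.coe_filter, Set.mem_setOf_eq, Finset.mem_coe, Finset.mem_filter, Finset.mem_Ioo] at ht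
          simp only [Finset.coe_filter, Set.mem_setOf_eq, Finset.mem_coe, Finset.mem_filter, Finset.mem_range]
          exact ⟨Nat.mod_lt _ (by omega), by rw [← starSched_eq hn]; exact ht.2⟩
        · intro t1 h1 t2 h2 he
          simp only [Finset.coe_filter, Set.mem_setOf_eq, Finset.mem_Ioo] at h1 h2
          have key : ∀ s1 s2 : ℕ, a < s1 → s1 ≤ s2 → s2 < b →
              s1 % (n+3) = s2 % (n+3) → s1 = s2 := by
            intro s1 s2 hs1 hle hs2 hmod
            rcases Nat.eq_or_lt_of_le hle with h | h
            · exact h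
            · have hd := (Nat.modEq_iff_dvd' hle).mp hmod
              have := Nat.le_of_dvd (by omega) hd
              omega
          rcases le_total t1 t2 with hle | hle
          · exact key t1 t2 h1.1.1 hle h2.1.2 he
          · exact (key t2 t1 h2.1.1 hle h1.1.2 he.symm).symm
    _ ≤ 3 := count_le_three hn y

/-- The configuration at offset `j` within a period. -/
def conf (n : ℕ) (j : ℕ) : Fin (n+1) → ZMod 2 := fun w =>
  if j = 0 then (if w = ((1:ℕ):Fin (n+1)) ∨ w = ((2:ℕ):Fin (n+1)) then 1 else 0)
  else if j = 1 then
    (if w = 0 ∨ w = ((1:ℕ):Fin (n+1)) ∨ w = ((2:ℕ):Fin (n+1)) then 1 else 0)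
  else if j ≤ n - 1 then (if w = ((2:ℕ):Fin (n+1)) then 1 else 0)
  else if j = n then (if w = 0 ∨ w = ((2:ℕ):Fin (n+1)) then 1 else 0)
  else if j = n + 1 then
    (if w = 0 ∨ w = ((1:ℕ):Fin (n+1)) ∨ w = ((2:ℕ):Fin (n+1)) then 1 else 0)
  else (if w = 0 ∨ w = ((1:ℕ):Fin (n+1)) ∨ w = ((2:ℕ):Fin (n+1)) ∨
      w = ((n-1:ℕ):Fin (n+1)) then 1 else 0)

def traj (n : ℕ) : ℕ → Fin (n+1) → ZMod 2
  | 0 => conf n 0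
  | t+1 => pav (traj n t) (starSched n t) (starPartner n t)

lemma conf_zero (n : ℕ) : conf n 0 =
    fun w => if w = ((1:ℕ):Fin (n+1)) ∨ w = ((2:ℕ):Fin (n+1)) then 1 else 0 := by
  funext w; simp [conf]

lemma conf_one (n : ℕ) : conf n 1 =
    fun w => if w = 0 ∨ w = ((1:ℕ):Fin (n+1)) ∨ w = ((2:ℕ):Fin (n+1)) then 1 else 0 := by
  funext w; simp [conf]

lemma conf_mid {n j : ℕ} (hn : 4 ≤ n) (h2 : 2 ≤ j) (h3 : j ≤ n - 1) : conf n j =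
    fun w => if w = ((2:ℕ):Fin (n+1)) then 1 else 0 := by
  funext w; unfold conf
  rw [if_neg (by omega), if_neg (by omega), if_pos (by omega)]

lemma conf_n {n : ℕ} (hn : 4 ≤ n) : conf n n =
    fun w => if w = 0 ∨ w = ((2:ℕ):Fin (n+1)) then 1 else 0 := by
  funext w; unfold conf
  rw [if_neg (by omega), if_neg (by omega), if_neg (by omega), if_pos (by omega)]

lemma conf_np1 {n : ℕ} (hn : 4 ≤ n) : conf n (n+1) =
    fun w => if w = 0 ∨ w = ((1:ℕ):Fin (n+1)) ∨ w = ((2:ℕ):Fin (n+1)) then 1 else 0 := by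
  funext w; unfold conf
  rw [if_neg (by omega), if_neg (by omega), if_neg (by omega), if_neg (by omega),
    if_pos (by omega)]

lemma conf_np2 {n : ℕ} (hn : 4 ≤ n) : conf n (n+2) =
    fun w => if w = 0 ∨ w = ((1:ℕ):Fin (n+1)) ∨ w = ((2:ℕ):Fin (n+1)) ∨
      w = ((n-1:ℕ):Fin (n+1)) then 1 else 0 := by
  funext w; unfold conf
  rw [if_neg (by omega), if_neg (by omega), if_neg (by omega), if_neg (by omega),
    if_neg (by omega)]

lemma cast_eq_zero_iff {n : ℕ} (hn : 4 ≤ n) {a : ℕ} (ha : a ≤ n) :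
    ((a : ℕ) : Fin (n+1)) = 0 ↔ a = 0 := by
  rw [show (0 : Fin (n+1)) = ((0:ℕ) : Fin (n+1)) by simp]
  exact castInj hn ha (by omega)

lemma sval_mid_ge {n j : ℕ} (hn : 4 ≤ n) (h2 : 2 ≤ j) (h3 : j ≤ n-2) : 1 ≤ sval n j := by
  unfold sval; split_ifs <;> first | contradiction | omega

lemma sval_mid_le {n j : ℕ} (hn : 4 ≤ n) (h2 : 2 ≤ j) (h3 : j ≤ n-2) : sval n j ≤ n - 2 := by
  unfold sval; split_ifs <;> first | contradiction | omega

lemma sval_mid_ne2 {n j : ℕ} (hn : 4 ≤ n) (h2 : 2 ≤ j) (h3 : j ≤ n-2) : sval n j ≠ 2 := by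
  unfold sval; split_ifs <;> first | contradiction | omega

lemma sval_nm1 {n : ℕ} (hn : 4 ≤ n) : sval n (n-1) = 2 := by
  unfold sval; split_ifs <;> first | contradiction | omega

lemma sval_n {n : ℕ} (hn : 4 ≤ n) : sval n n = 1 := by
  unfold sval; split_ifs <;> first | contradiction | omega

lemma sval_np1 {n : ℕ} (hn : 4 ≤ n) : sval n (n+1) = n - 1 := by
  unfold sval; split_ifs <;> first | contradiction | omega

lemma sval_np2 {n : ℕ} (hn : 4 ≤ n) : sval n (n+2) = n - 1 := by
  unfold sval; split_ifs <;> first | contradiction | omega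

lemma traj_eq {n : ℕ} (hn : 4 ≤ n) (t : ℕ) : traj n t = conf n (t % (n+3)) := by
  have c10 : ((1:ℕ):Fin (n+1)) ≠ 0 := by
    rw [ne_eq, cast_eq_zero_iff hn (by omega)]; omega
  have c20 : ((2:ℕ):Fin (n+1)) ≠ 0 := by
    rw [ne_eq, cast_eq_zero_iff hn (by omega)]; omega
  have c12 : ((1:ℕ):Fin (n+1)) ≠ ((2:ℕ):Fin (n+1)) := by
    rw [ne_eq, castInj hn (by omega) (by omega)]; omega
  have cm0 : ((n-1:ℕ):Fin (n+1)) ≠ 0 := by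
    rw [ne_eq, cast_eq_zero_iff hn (by omega)]; omega
  have cm1 : ((n-1:ℕ):Fin (n+1)) ≠ ((1:ℕ):Fin (n+1)) := by
    rw [ne_eq, castInj hn (by omega) (by omega)]; omega
  have cm2 : ((n-1:ℕ):Fin (n+1)) ≠ ((2:ℕ):Fin (n+1)) := by
    rw [ne_eq, castInj hn (by omega) (by omega)]; omega
  have s10 := Ne.symm c10
  have s20 := Ne.symm c20
  have s12 := Ne.symm c12
  have sm0 := Ne.symm cm0
  have sm1 := Ne.symm cm1
  have sm2 := Ne.symm cm2
  have z11 : (1 : ZMod 2) + 1 = 0 := by decide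
  induction t with
  | zero => simp [traj, Nat.zero_mod]
  | succ t ih =>
    set j := t % (n+3) with hj
    have hjlt : j < n + 3 := Nat.mod_lt _ (by omega)
    have hq := Nat.div_add_mod t (n+3)
    have hsucc : (t+1) % (n+3) = if j = n + 2 then 0 else j + 1 := by
      split_ifs with h
      · rw [show t + 1 = (n+3) * (t/(n+3)) + (n+3) by omega, Nat.mul_add_mod,
          Nat.mod_self]
      · rw [show t + 1 = (n+3) * (t/(n+3)) + (j+1) by omega, Nat.mul_add_mod,
          Nat.mod_eq_of_lt (by omega)]
    have hsched : starSched n t = ((sval n j : ℕ) : Fin (n+1)) := starSched_eq hn t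
    rw [show traj n (t+1) = pav (traj n t) (starSched n t) (starPartner n t) from rfl,
      ih, hsucc]
    unfold starPartner
    rw [hsched]
    rcases (by omega : j = 0 ∨ j = 1 ∨ (2 ≤ j ∧ j ≤ n-2) ∨ j = n-1 ∨ j = n ∨
        j = n+1 ∨ j = n+2) with h | h | h | h | h | h | h
    · -- j = 0 : center plays leaf 1
      rw [h, show sval n 0 = 0 from rfl, Nat.cast_zero, if_pos rfl,
        if_neg (by omega), conf_zero, conf_one]
      funext w
      simp only [pav]
      by_cases h0 : w = 0
      · simp only [h0, s10, s20, c10, c20, c12, cm0, cm1, cm2, s10, s20, s12, sm0, sm1, sm2, eq_self_iff_true, true_or, or_true, or_false, false_or, if_true, if_false, z11, zero_add, add_zero]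
      · by_cases h1 : w = ((1:ℕ):Fin (n+1))
        · simp only [h1, c10, c12, s10, s20, c10, c20, c12, cm0, cm1, cm2, s10, s20, s12, sm0, sm1, sm2, eq_self_iff_true, true_or, or_true, or_false, false_or, if_true, if_false, z11, zero_add, add_zero]
        · by_cases h2 : w = ((2:ℕ):Fin (n+1))
          · simp only [h2, c20, s12, s10, s20, c10, c20, c12, cm0, cm1, cm2, s10, s20, s12, sm0, sm1, sm2, eq_self_iff_true, true_or, or_true, or_false, false_or, if_true, if_false, z11, zero_add, add_zero]
          · simp only [h0, h1, h2, s10, s20, c10, c20, c12, cm0, cm1, cm2, s10, s20, s12, sm0, sm1, sm2, eq_self_iff_true, true_or, or_true, or_false, false_or, if_true, if_false, z11, zero_add, add_zero]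
    · -- j = 1 : leaf 1 plays center
      rw [h, show sval n 1 = 1 from rfl, if_neg c10, if_neg (by omega), conf_one,
        conf_mid (j := 1+1) hn (by omega) (by omega)]
      funext w
      simp only [pav]
      by_cases h0 : w = 0
      · simp only [h0, s10, s20, c10, c10, c20, c12, cm0, cm1, cm2, s10, s20, s12, sm0, sm1, sm2, eq_self_iff_true, true_or, or_true, or_false, false_or, if_true, if_false, z11, zero_add, add_zero]
      · by_cases h1 : w = ((1:ℕ):Fin (n+1))
        · simp only [h1, c10, c12, c10, c20, c12, cm0, cm1, cm2, s10, s20, s12, sm0, sm1, sm2, eq_self_iff_true, true_or, or_true, or_false, false_or, if_true, if_false, z11, zero_add, add_zero]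
        · by_cases h2 : w = ((2:ℕ):Fin (n+1))
          · simp only [h2, s12, c20, c10, c10, c20, c12, cm0, cm1, cm2, s10, s20, s12, sm0, sm1, sm2, eq_self_iff_true, true_or, or_true, or_false, false_or, if_true, if_false, z11, zero_add, add_zero]
          · simp only [h0, h1, h2, c10, c10, c20, c12, cm0, cm1, cm2, s10, s20, s12, sm0, sm1, sm2, eq_self_iff_true, true_or, or_true, or_false, false_or, if_true, if_false, z11, zero_add, add_zero]
    · -- 2 ≤ j ≤ n-2 : a leaf other than 0,1,2 (or leaf 1) plays center, no-op
      have hs1 : 1 ≤ sval n j := sval_mid_ge hn h.1 h.2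
      have hs2 : sval n j ≤ n - 2 := sval_mid_le hn h.1 h.2
      have hs3 : sval n j ≠ 2 := sval_mid_ne2 hn h.1 h.2
      have hu0 : ((sval n j : ℕ) : Fin (n+1)) ≠ 0 := by
        rw [ne_eq, cast_eq_zero_iff hn (by omega)]; omega
      have hu2 : ((sval n j : ℕ) : Fin (n+1)) ≠ ((2:ℕ):Fin (n+1)) := by
        rw [ne_eq, castInj hn (by omega) (by omega)]; omega
      have su0 := Ne.symm hu0
      have su2 := Ne.symm hu2
      rw [if_neg hu0, if_neg (by omega), conf_mid (j := j) hn (by omega) (by omega),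
        conf_mid (j := j+1) hn (by omega) (by omega)]
      funext w
      simp only [pav]
      by_cases hu : w = ((sval n j : ℕ) : Fin (n+1))
      · simp only [hu, hu0, hu2, su0, su2, s20, c10, c20, c12, cm0, cm1, cm2, s10, s20, s12, sm0, sm1, sm2, eq_self_iff_true, true_or, or_true, or_false, false_or, if_true, if_false, z11, zero_add, add_zero]
      · by_cases h0 : w = 0
        · simp only [h0, s20, hu0, hu2, su0, su2, c10, c20, c12, cm0, cm1, cm2, s10, s20, s12, sm0, sm1, sm2, eq_self_iff_true, true_or, or_true, or_false, false_or, if_true, if_false, z11, zero_add, add_zero]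
        · simp only [hu, h0, hu2, su2, s20, c10, c20, c12, cm0, cm1, cm2, s10, s20, s12, sm0, sm1, sm2, eq_self_iff_true, true_or, or_true, or_false, false_or, if_true, if_false, z11, zero_add, add_zero]
    · -- j = n-1 : leaf 2 plays center
      have hs : sval n (n-1) = 2 := sval_nm1 hn
      rw [h, hs, if_neg c20, if_neg (by omega),
        conf_mid (j := n-1) hn (by omega) (by omega),
        show n - 1 + 1 = n by omega, conf_n hn]
      funext w
      simp only [pav]
      by_cases h0 : w = 0
      · simp only [h0, s20, c20, c10, c20, c12, cm0, cm1, cm2, s10, s20, s12, sm0, sm1, sm2, eq_self_iff_true, true_or, or_true, or_false, false_or, if_true, if_false, z11, zero_add, add_zero]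
      · by_cases h2 : w = ((2:ℕ):Fin (n+1))
        · simp only [h2, s20, c20, c10, c20, c12, cm0, cm1, cm2, s10, s20, s12, sm0, sm1, sm2, eq_self_iff_true, true_or, or_true, or_false, false_or, if_true, if_false, z11, zero_add, add_zero]
        · simp only [h0, h2, c20, s20, c10, c20, c12, cm0, cm1, cm2, s10, s20, s12, sm0, sm1, sm2, eq_self_iff_true, true_or, or_true, or_false, false_or, if_true, if_false, z11, zero_add, add_zero]
    · -- j = n : leaf 1 plays center
      have hs : sval n n = 1 := sval_n hn
      rw [h]
      rw [hs]
      rw [if_neg c10]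
      rw [if_neg (by omega)]
      rw [conf_n hn]
      rw [conf_np1 hn]
      funext w
      simp only [pav]
      by_cases h0 : w = 0
      · simp only [h0, s10, s20, c10, c10, c20, c12, cm0, cm1, cm2, s10, s20, s12, sm0, sm1, sm2, eq_self_iff_true, true_or, or_true, or_false, false_or, if_true, if_false, z11, zero_add, add_zero]
      · by_cases h1 : w = ((1:ℕ):Fin (n+1))
        · simp only [h1, c10, c12, s10, s20, c10, c20, c12, cm0, cm1, cm2, s10, s20, s12, sm0, sm1, sm2, eq_self_iff_true, true_or, or_true, or_false, false_or, if_true, if_false, z11, zero_add, add_zero]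
        · by_cases h2 : w = ((2:ℕ):Fin (n+1))
          · simp only [h2, s12, c20, c10, s20, c10, c20, c12, cm0, cm1, cm2, s10, s20, s12, sm0, sm1, sm2, eq_self_iff_true, true_or, or_true, or_false, false_or, if_true, if_false, z11, zero_add, add_zero]
          · simp only [h0, h1, h2, c10, s20, c10, c20, c12, cm0, cm1, cm2, s10, s20, s12, sm0, sm1, sm2, eq_self_iff_true, true_or, or_true, or_false, false_or, if_true, if_false, z11, zero_add, add_zero]
    · -- j = n+1 : leaf n-1 plays center
      have hs : sval n (n+1) = n - 1 := sval_np1 hn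
      rw [h]
      rw [hs]
      rw [if_neg cm0]
      rw [if_neg (by omega)]
      rw [conf_np1 hn]
      rw [show n + 1 + 1 = n + 2 by omega]
      rw [conf_np2 hn]
      funext w
      simp only [pav]
      by_cases h0 : w = 0
      · simp only [h0, s10, s20, sm0, cm0, cm1, cm2, c10, c20, c12, cm0, cm1, cm2, s10, s20, s12, sm0, sm1, sm2, eq_self_iff_true, true_or, or_true, or_false, false_or, if_true, if_false, z11, zero_add, add_zero]
      · by_cases h1 : w = ((1:ℕ):Fin (n+1))
        · simp only [h1, s10, sm1, cm0, cm1, cm2, c10, c12, c10, c20, c12, cm0, cm1, cm2, s10, s20, s12, sm0, sm1, sm2, eq_self_iff_true, true_or, or_true, or_false, false_or, if_true, if_false, z11, zero_add, add_zero]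
        · by_cases h2 : w = ((2:ℕ):Fin (n+1))
          · simp only [h2, s20, sm2, cm0, cm1, cm2, s12, c10, c20, c12, cm0, cm1, cm2, s10, s20, s12, sm0, sm1, sm2, eq_self_iff_true, true_or, or_true, or_false, false_or, if_true, if_false, z11, zero_add, add_zero]
          · by_cases hm : w = ((n-1:ℕ):Fin (n+1))
            · simp only [hm, cm0, cm1, cm2, c10, c20, c12, cm0, cm1, cm2, s10, s20, s12, sm0, sm1, sm2, eq_self_iff_true, true_or, or_true, or_false, false_or, if_true, if_false, z11, zero_add, add_zero]
            · simp only [h0, h1, h2, hm, cm0, cm1, cm2, c10, c20, c12, cm0, cm1, cm2, s10, s20, s12, sm0, sm1, sm2, eq_self_iff_true, true_or, or_true, or_false, false_or, if_true, if_false, z11, zero_add, add_zero]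
    · -- j = n+2 : leaf n-1 plays center, back to the start
      have hs : sval n (n+2) = n - 1 := sval_np2 hn
      rw [h]
      rw [hs]
      rw [if_neg cm0]
      rw [if_pos rfl]
      rw [conf_np2 hn]
      rw [conf_zero]
      funext w
      simp only [pav]
      by_cases h0 : w = 0
      · simp only [h0, s10, s20, sm0, cm0, cm1, cm2, c10, c20, c12, cm0, cm1, cm2, s10, s20, s12, sm0, sm1, sm2, eq_self_iff_true, true_or, or_true, or_false, false_or, if_true, if_false, z11, zero_add, add_zero]
      · by_cases h1 : w = ((1:ℕ):Fin (n+1))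
        · simp only [h1, sm1, cm0, cm1, cm2, c10, c10, c20, c12, cm0, cm1, cm2, s10, s20, s12, sm0, sm1, sm2, eq_self_iff_true, true_or, or_true, or_false, false_or, if_true, if_false, z11, zero_add, add_zero]
        · by_cases h2 : w = ((2:ℕ):Fin (n+1))
          · simp only [h2, sm2, cm0, cm1, cm2, c20, c10, c20, c12, cm0, cm1, cm2, s10, s20, s12, sm0, sm1, sm2, eq_self_iff_true, true_or, or_true, or_false, false_or, if_true, if_false, z11, zero_add, add_zero]
          · by_cases hm : w = ((n-1:ℕ):Fin (n+1))
            · simp only [hm, cm0, cm1, cm2, sm1, sm2, c10, c20, c12, cm0, cm1, cm2, s10, s20, s12, sm0, sm1, sm2, eq_self_iff_true, true_or, or_true, or_false, false_or, if_true, if_false, z11, zero_add, add_zero]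
            · simp only [h0, h1, h2, hm, cm0, c10, c20, c12, cm0, cm1, cm2, s10, s20, s12, sm0, sm1, sm2, eq_self_iff_true, true_or, or_true, or_false, false_or, if_true, if_false, z11, zero_add, add_zero]

lemma conf_c2 {n : ℕ} (hn : 4 ≤ n) (j : ℕ) : conf n j ((2:ℕ):Fin (n+1)) = 1 := by
  unfold conf; split_ifs <;> simp_all

/-- On the star `K_{1,n}` (`n ≥ 4`), the periodic node schedule
`[0, 1, 1, 3, 4, …, n-2, 2, 1, n-1, n-1]` is `3`-fair, and — with the partner choices
it realizes — the Pavlov dynamics started from the configuration with `1`s exactly at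
leaves `1` and `2` returns to this configuration after every period, hence never reaches
the all-zeros configuration. -/
theorem stmt_18 (n : ℕ) (hn : 4 ≤ n) :
    let init : Fin (n + 1) → ZMod 2 :=
      fun v => if v = ((1 : ℕ) : Fin (n + 1)) ∨ v = ((2 : ℕ) : Fin (n + 1)) then 1 else 0
    -- periodicity of the schedule
    (∀ t : ℕ, starSched n (t + (n + 3)) = starSched n t) ∧
    -- every step plays an edge of the star: scheduled node ≠ partner, one of them is 0
    (∀ t : ℕ, starSched n t ≠ starPartner n t ∧
      (starSched n t = 0 ∨ starPartner n t = 0)) ∧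
    -- 3-fairness: between two consecutive schedulings of any node `x`,
    -- no other node `y` is scheduled more than 3 times
    (∀ x y : Fin (n + 1), x ≠ y → ∀ a b : ℕ, a < b →
      starSched n a = x → starSched n b = x →
      (∀ t : ℕ, a < t → t < b → starSched n t ≠ x) →
      ((Finset.Ioo a b).filter (fun t => starSched n t = y)).card ≤ 3) ∧
    -- the trajectory returns to `init` after each period and never reaches all-zeros
    (∃ T : ℕ → Fin (n + 1) → ZMod 2,
      T 0 = init ∧
      (∀ t : ℕ, T (t + 1) = pav (T t) (starSched n t) (starPartner n t)) ∧
      (∀ k : ℕ, T (k * (n + 3)) = init) ∧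
      (∀ t : ℕ, T t ≠ 0)) := by
  intro init
  have c10 : ((1:ℕ):Fin (n+1)) ≠ 0 := by
    rw [ne_eq, cast_eq_zero_iff hn (by omega)]; omega
  refine ⟨?_, ?_, ?_, ?_⟩
  · intro t
    simp [starSched, Nat.add_mod_right]
  · intro t
    unfold starPartner
    constructor
    · split_ifs with h
      · rw [h]; exact fun he => c10 he.symm
      · exact h
    · split_ifs with h
      · exact Or.inl h
      · exact Or.inr rfl
  · intro x y hxy a b hab hax hbx hbet
    exact fairness hn y x a b hab hax hbet
  · refine ⟨traj n, ?_, fun t => rfl, ?_, ?_⟩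
    · exact conf_zero n
    · intro k
      rw [traj_eq hn, Nat.mul_mod_left]
      exact conf_zero n
    · intro t hT
      have h2 : traj n t ((2:ℕ):Fin (n+1)) = 1 := by
        rw [traj_eq hn]; exact conf_c2 hn _
      rw [hT, Pi.zero_apply] at h2
      exact absurd h2.symm one_ne_zero
end
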